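/- Let I ⊆ ℝ be a bounded open interval, f : I → ℝ a positive continuous function, and φ : I → ℝ a convex function whose Monge-Ampère measure satisfies MA(φ) = f·dx on I (dx the Lebesgue measure). If f is k times continuously differentiable, then φ is (k+2) times continuously differentiable, and φ'' = f. -/
import Mathlib

open MeasureTheory Set

noncomputable section

/-- The one-dimensional gradient image (subdifferential) of `φ` at `x` relative to `I`. -/
def gradientImage1 (I : Set ℝ) (φ : ℝ → ℝ) (x : ℝ) : Set ℝ :=
  {p | ∀ z ∈ I, φ x + p * (z - x) ≤ φ z}

namespace MA1


/-- slope of φ between x and z -/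
def sl (φ : ℝ → ℝ) (x z : ℝ) : ℝ := (φ z - φ x) / (z - x)

lemma sl_comm (φ : ℝ → ℝ) (x z : ℝ) : sl φ x z = sl φ z x := by
  unfold sl
  rw [← neg_div_neg_eq]; ring_nf

/-- left derivative candidate -/
def ld (a : ℝ) (φ : ℝ → ℝ) (x : ℝ) : ℝ := sSup (sl φ x '' Set.Ioo a x)
/-- right derivative candidate -/
def rd (b : ℝ) (φ : ℝ → ℝ) (x : ℝ) : ℝ := sInf (sl φ x '' Set.Ioo x b)

variable {a b x y z w : ℝ} {φ : ℝ → ℝ}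

lemma slope_le_slope (hφ : ConvexOn ℝ (Set.Ioo a b) φ) (hx : x ∈ Set.Ioo a b)
    (hz : z ∈ Set.Ioo a b) (hw : w ∈ Set.Ioo a b) (hzx : z ≠ x) (hwx : w ≠ x)
    (hzw : z ≤ w) : sl φ x z ≤ sl φ x w :=
  hφ.secant_mono hx hz hw hzx hwx hzw

lemma nonempty_left (hx : x ∈ Set.Ioo a b) : (sl φ x '' Set.Ioo a x).Nonempty :=
  (Set.nonempty_Ioo.2 hx.1).image _

lemma nonempty_right (hx : x ∈ Set.Ioo a b) : (sl φ x '' Set.Ioo x b).Nonempty :=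
  (Set.nonempty_Ioo.2 hx.2).image _

lemma slope_lr (hφ : ConvexOn ℝ (Set.Ioo a b) φ) (hx : x ∈ Set.Ioo a b)
    (hz : z ∈ Set.Ioo a x) (hw : w ∈ Set.Ioo x b) : sl φ x z ≤ sl φ x w :=
  slope_le_slope hφ hx ⟨hz.1, hz.2.trans hx.2⟩ ⟨hx.1.trans hw.1, hw.2⟩
    hz.2.ne hw.1.ne' (hz.2.trans hw.1).le

lemma bddAbove_left (hφ : ConvexOn ℝ (Set.Ioo a b) φ) (hx : x ∈ Set.Ioo a b) :
    BddAbove (sl φ x '' Set.Ioo a x) := by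
  obtain ⟨w, hw⟩ := Set.nonempty_Ioo.2 hx.2
  exact ⟨sl φ x w, by rintro s ⟨z, hz, rfl⟩; exact slope_lr hφ hx hz hw⟩

lemma bddBelow_right (hφ : ConvexOn ℝ (Set.Ioo a b) φ) (hx : x ∈ Set.Ioo a b) :
    BddBelow (sl φ x '' Set.Ioo x b) := by
  obtain ⟨z, hz⟩ := Set.nonempty_Ioo.2 hx.1
  exact ⟨sl φ x z, by rintro s ⟨w, hw, rfl⟩; exact slope_lr hφ hx hz hw⟩

lemma le_ld (hφ : ConvexOn ℝ (Set.Ioo a b) φ) (hx : x ∈ Set.Ioo a b)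
    (hz : z ∈ Set.Ioo a x) : sl φ x z ≤ ld a φ x :=
  le_csSup (bddAbove_left hφ hx) ⟨z, hz, rfl⟩

lemma rd_le (hφ : ConvexOn ℝ (Set.Ioo a b) φ) (hx : x ∈ Set.Ioo a b)
    (hw : w ∈ Set.Ioo x b) : rd b φ x ≤ sl φ x w :=
  csInf_le (bddBelow_right hφ hx) ⟨w, hw, rfl⟩

lemma ld_le_slope (hφ : ConvexOn ℝ (Set.Ioo a b) φ) (hx : x ∈ Set.Ioo a b)
    (hw : w ∈ Set.Ioo x b) : ld a φ x ≤ sl φ x w :=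
  csSup_le (nonempty_left hx) (by rintro s ⟨z, hz, rfl⟩; exact slope_lr hφ hx hz hw)

lemma slope_le_rd (hφ : ConvexOn ℝ (Set.Ioo a b) φ) (hx : x ∈ Set.Ioo a b)
    (hz : z ∈ Set.Ioo a x) : sl φ x z ≤ rd b φ x :=
  le_csInf (nonempty_right hx) (by rintro s ⟨w, hw, rfl⟩; exact slope_lr hφ hx hz hw)

lemma ld_le_rd (hφ : ConvexOn ℝ (Set.Ioo a b) φ) (hx : x ∈ Set.Ioo a b) :
    ld a φ x ≤ rd b φ x :=
  csSup_le (nonempty_left hx) (by rintro s ⟨z, hz, rfl⟩; exact slope_le_rd hφ hx hz)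

lemma rd_le_ld (hφ : ConvexOn ℝ (Set.Ioo a b) φ) (hx : x ∈ Set.Ioo a b)
    (hy : y ∈ Set.Ioo a b) (hxy : x < y) : rd b φ x ≤ ld a φ y := by
  refine (rd_le hφ hx ⟨hxy, hy.2⟩).trans ?_
  rw [sl_comm]
  exact le_ld hφ hy ⟨hx.1, hxy⟩

lemma ld_mono (hφ : ConvexOn ℝ (Set.Ioo a b) φ) (hx : x ∈ Set.Ioo a b)
    (hy : y ∈ Set.Ioo a b) (hxy : x ≤ y) : ld a φ x ≤ ld a φ y := by
  rcases eq_or_lt_of_le hxy with rfl | h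
  · exact le_rfl
  · exact (ld_le_rd hφ hx).trans (rd_le_ld hφ hx hy h)

lemma rd_mono (hφ : ConvexOn ℝ (Set.Ioo a b) φ) (hx : x ∈ Set.Ioo a b)
    (hy : y ∈ Set.Ioo a b) (hxy : x ≤ y) : rd b φ x ≤ rd b φ y := by
  rcases eq_or_lt_of_le hxy with rfl | h
  · exact le_rfl
  · exact (rd_le_ld hφ hx hy h).trans (ld_le_rd hφ hy)


lemma grad_eq (hφ : ConvexOn ℝ (Set.Ioo a b) φ) (hx : x ∈ Set.Ioo a b) :
    gradientImage1 (Set.Ioo a b) φ x = Set.Icc (ld a φ x) (rd b φ x) := by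
  ext p
  constructor
  · intro hp
    constructor
    · refine csSup_le (nonempty_left hx) ?_
      rintro s ⟨z, hz, rfl⟩
      have h := hp z ⟨hz.1, hz.2.trans hx.2⟩
      rw [sl, div_le_iff_of_neg (by linarith [hz.2] : z - x < 0)]
      linarith
    · refine le_csInf (nonempty_right hx) ?_
      rintro s ⟨w, hw, rfl⟩
      have h := hp w ⟨hx.1.trans hw.1, hw.2⟩
      rw [sl, le_div_iff₀ (by linarith [hw.1] : 0 < w - x)]
      linarith
  · rintro ⟨h1, h2⟩ z hz
    rcases lt_trichotomy z x with h | rfl | h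
    · have := (le_ld hφ hx ⟨hz.1, h⟩).trans h1
      rw [sl, div_le_iff_of_neg (by linarith : z - x < 0)] at this
      linarith
    · simp
    · have := h2.trans (rd_le hφ hx ⟨h, hz.2⟩)
      rw [sl, le_div_iff₀ (by linarith : 0 < z - x)] at this
      linarith

lemma union_grad_eq (hφ : ConvexOn ℝ (Set.Ioo a b) φ) (hx : x ∈ Set.Ioo a b)
    (hy : y ∈ Set.Ioo a b) (hxy : x ≤ y) :
    (⋃ t ∈ Set.Icc x y, gradientImage1 (Set.Ioo a b) φ t) =
      Set.Icc (ld a φ x) (rd b φ y) := by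
  have hsub : Set.Icc x y ⊆ Set.Ioo a b := fun t ht => ⟨hx.1.trans_le ht.1, ht.2.trans_lt hy.2⟩
  apply Set.Subset.antisymm
  · refine Set.iUnion₂_subset fun t ht => ?_
    have htI := hsub ht
    rw [grad_eq hφ htI]
    exact Set.Icc_subset_Icc (ld_mono hφ hx htI ht.1) (rd_mono hφ htI hy ht.2)
  · rintro p ⟨hp1, hp2⟩
    -- minimize h := φ - p • id on [x, y]
    have hcont : ContinuousOn (fun t => φ t - p * t) (Set.Icc x y) := by
      refine ContinuousOn.sub ?_ (by fun_prop)
      exact (hφ.continuousOn isOpen_Ioo).mono hsub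
    obtain ⟨t, htmem, htmin⟩ := isCompact_Icc.exists_isMinOn (Set.nonempty_Icc.2 hxy) hcont
    have htI := hsub htmem
    refine Set.mem_iUnion₂.2 ⟨t, htmem, ?_⟩
    rw [grad_eq hφ htI]
    have hmin : ∀ u ∈ Set.Icc x y, φ t - p * t ≤ φ u - p * u := fun u hu => htmin hu
    constructor
    · -- ld a φ t ≤ p
      refine csSup_le (nonempty_left htI) ?_
      rintro s ⟨z, hz, rfl⟩
      rcases le_or_gt x z with hxz | hzx
      · -- z ∈ [x, t)
        have := hmin z ⟨hxz, hz.2.le.trans htmem.2⟩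
        rw [sl, div_le_iff_of_neg (by linarith [hz.2] : z - t < 0)]
        linarith
      · -- z < x ≤ t
        rcases eq_or_lt_of_le htmem.1 with rfl | hxt
        · exact (le_ld hφ htI hz).trans hp1
        · have h1 : sl φ t z ≤ sl φ t x :=
            slope_le_slope hφ htI ⟨hz.1, hz.2.trans htI.2⟩ hx hz.2.ne hxt.ne hzx.le
          have h2 : sl φ t x ≤ p := by
            have := hmin x ⟨le_rfl, hxy⟩
            rw [sl, div_le_iff_of_neg (by linarith : x - t < 0)]
            linarith
          exact h1.trans h2
    · -- p ≤ rd b φ t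
      refine le_csInf (nonempty_right htI) ?_
      rintro s ⟨w, hw, rfl⟩
      rcases le_or_gt w y with hwy | hyw
      · have := hmin w ⟨htmem.1.trans hw.1.le, hwy⟩
        rw [sl, le_div_iff₀ (by linarith [hw.1] : 0 < w - t)]
        linarith
      · rcases eq_or_lt_of_le htmem.2 with rfl | hty
        · exact hp2.trans (rd_le hφ htI hw)
        · have h1 : sl φ t y ≤ sl φ t w :=
            slope_le_slope hφ htI hy ⟨htI.1.trans hw.1, hw.2⟩ hty.ne' hw.1.ne' hyw.le
          have h2 : p ≤ sl φ t y := by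
            have := hmin y ⟨hxy, le_rfl⟩
            rw [sl, le_div_iff₀ (by linarith : 0 < y - t)]
            linarith
          exact h2.trans h1

end MA1

open MA1 in
/-- Regularity of solutions to the one-dimensional Monge-Ampère equation: if the
Monge-Ampère measure of the convex function `φ` on a bounded open interval is `f·dx`
with `f` positive and `Cᵏ`, then `φ` is `C^{k+2}` with `φ'' = f`. -/
theorem mongeAmpere_regularity_dim_one (a b : ℝ) (hab : a < b)
    (f φ : ℝ → ℝ)
    (hfpos : ∀ x ∈ Set.Ioo a b, 0 < f x)
    (hfcont : ContinuousOn f (Set.Ioo a b))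
    (hφconv : ConvexOn ℝ (Set.Ioo a b) φ)
    (k : ℕ) (hf : ContDiffOn ℝ k f (Set.Ioo a b))
    (hMA : ∀ E : Set ℝ, MeasurableSet E → E ⊆ Set.Ioo a b →
      volume (⋃ x ∈ E, gradientImage1 (Set.Ioo a b) φ x) =
        ∫⁻ x in E, ENNReal.ofReal (f x) ∂volume) :
    ContDiffOn ℝ (k + 2) φ (Set.Ioo a b) ∧
      ∀ x ∈ Set.Ioo a b, deriv (deriv φ) x = f x := by
  have hIopen : IsOpen (Set.Ioo a b) := isOpen_Ioo
  set g : ℝ → ℝ := ld a φ with hgdef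
  -- rd = ld everywhere (from MA on singletons)
  have hsingle : ∀ x ∈ Set.Ioo a b, rd b φ x = g x := by
    intro x hx
    have h := hMA {x} (measurableSet_singleton x) (Set.singleton_subset_iff.2 hx)
    rw [Set.biUnion_singleton, grad_eq hφconv hx, Real.volume_Icc] at h
    have h0 : (∫⁻ t in ({x} : Set ℝ), ENNReal.ofReal (f t) ∂volume) = 0 :=
      setLIntegral_measure_zero _ _ (measure_singleton x)
    rw [h0, ENNReal.ofReal_eq_zero] at h
    exact le_antisymm (by linarith) (ld_le_rd hφconv hx)
  -- the fundamental identity  g y - g x = ∫_{[x,y]} f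
  have hint : ∀ x ∈ Set.Ioo a b, ∀ y ∈ Set.Ioo a b, x ≤ y →
      g y - g x = ∫ t in Set.Icc x y, f t := by
    intro x hx y hy hxy
    have hsub : Set.Icc x y ⊆ Set.Ioo a b :=
      fun t ht => ⟨hx.1.trans_le ht.1, ht.2.trans_lt hy.2⟩
    have h := hMA (Set.Icc x y) measurableSet_Icc hsub
    rw [union_grad_eq hφconv hx hy hxy, Real.volume_Icc, hsingle y hy] at h
    have hfi : IntegrableOn f (Set.Icc x y) volume :=
      (hfcont.mono hsub).integrableOn_Icc
    have hnn : 0 ≤ᵐ[volume.restrict (Set.Icc x y)] f :=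
      (ae_restrict_iff' measurableSet_Icc).2
        (Filter.Eventually.of_forall fun t ht => (hfpos t (hsub ht)).le)
    rw [← ofReal_integral_eq_lintegral_ofReal hfi hnn] at h
    have hle : g x ≤ g y := ld_mono hφconv hx hy hxy
    have hnn2 : 0 ≤ ∫ t in Set.Icc x y, f t :=
      setIntegral_nonneg measurableSet_Icc fun t ht => (hfpos t (hsub ht)).le
    have := (ENNReal.ofReal_eq_ofReal_iff (by linarith) hnn2).1 h
    linarith
  -- g in terms of an interval integral
  set c : ℝ := (a + b) / 2 with hcdef
  have hc : c ∈ Set.Ioo a b := ⟨by linarith, by linarith⟩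
  have hgx : ∀ x ∈ Set.Ioo a b, g x = g c + ∫ t in c..x, f t := by
    intro x hx
    rcases le_or_gt c x with h | h
    · have := hint c hc x hx h
      rw [intervalIntegral.integral_of_le h, ← integral_Icc_eq_integral_Ioc]
      linarith
    · have := hint x hx c hc h.le
      have h2 : (∫ t in x..c, f t) = ∫ t in Set.Icc x c, f t := by
        rw [intervalIntegral.integral_of_le h.le, ← integral_Icc_eq_integral_Ioc]
      rw [intervalIntegral.integral_symm x c, h2]
      linarith
  have hfi : ∀ x ∈ Set.Ioo a b, IntervalIntegrable f volume c x := by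
    intro x hx
    apply (hfcont.mono ?_).intervalIntegrable
    intro t ht
    exact ⟨(lt_min hc.1 hx.1).trans_le ht.1, ht.2.trans_lt (max_lt hc.2 hx.2)⟩
  have hgderiv : ∀ x ∈ Set.Ioo a b, HasDerivAt g (f x) x := by
    intro x hx
    have hF : HasDerivAt (fun u => g c + ∫ t in c..u, f t) (f x) x :=
      (intervalIntegral.integral_hasDerivAt_right (hfi x hx)
        (hfcont.stronglyMeasurableAtFilter hIopen x hx)
        (hfcont.continuousAt (hIopen.mem_nhds hx))).const_add (g c)
    exact hF.congr_of_eventuallyEq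
      (Filter.eventuallyEq_of_mem (hIopen.mem_nhds hx) fun u hu => hgx u hu)
  -- φ is differentiable with derivative g
  have hφderiv : ∀ x ∈ Set.Ioo a b, HasDerivAt φ (g x) x := by
    intro x hx
    rw [hasDerivAt_iff_tendsto_slope, tendsto_iff_dist_tendsto_zero]
    have hev : ∀ᶠ z in nhdsWithin x {x}ᶜ,
        dist (slope φ x z) (g x) ≤ |g z - g x| := by
      have h1 : ∀ᶠ z in nhdsWithin x {x}ᶜ, z ∈ Set.Ioo a b :=
        Filter.Eventually.filter_mono nhdsWithin_le_nhds (hIopen.eventually_mem hx)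
      have h2 : ∀ᶠ z in nhdsWithin x {x}ᶜ, z ∈ ({x}ᶜ : Set ℝ) :=
        eventually_mem_nhdsWithin
      filter_upwards [h1, h2] with z hz hzx
      have hzx' : z ≠ x := hzx
      rw [Real.dist_eq, slope_def_field]
      have hs : slope φ x z = sl φ x z := slope_def_field φ x z
      rcases lt_or_gt_of_ne hzx' with h | h
      · -- z < x
        have hu : sl φ x z ≤ g x := le_ld hφconv hx ⟨hz.1, h⟩
        have hl : g z ≤ sl φ x z := by
          rw [sl_comm]
          exact (hsingle z hz).symm.trans_le (rd_le hφconv hz ⟨h, hx.2⟩)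
        rw [abs_sub_le_iff]
        constructor
        · have : (φ z - φ x) / (z - x) - g x ≤ 0 := by
            have := hu; rw [sl] at this; linarith
          exact this.trans (abs_nonneg _)
        · have : g x - (φ z - φ x) / (z - x) ≤ g x - g z := by
            have := hl; rw [sl] at this; linarith
          calc g x - (φ z - φ x) / (z - x) ≤ g x - g z := this
            _ ≤ |g x - g z| := le_abs_self _
            _ = |g z - g x| := abs_sub_comm _ _
      · -- z > x
        have hl : g x ≤ sl φ x z :=
          (hsingle x hx).symm.trans_le (rd_le hφconv hx ⟨h, hz.2⟩)
        have hu : sl φ x z ≤ g z := by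
          rw [sl_comm]
          exact le_ld hφconv hz ⟨hx.1, h⟩
        rw [abs_sub_le_iff]
        constructor
        · have : (φ z - φ x) / (z - x) - g x ≤ g z - g x := by
            have := hu; rw [sl] at this; linarith
          exact this.trans (le_abs_self _)
        · have : g x - (φ z - φ x) / (z - x) ≤ 0 := by
            have := hl; rw [sl] at this; linarith
          exact this.trans (abs_nonneg _)
    have hgc : Filter.Tendsto (fun z => |g z - g x|) (nhdsWithin x {x}ᶜ) (nhds 0) := by
      have h0 : Filter.Tendsto (fun z => |g z - g x|) (nhds x) (nhds |g x - g x|) :=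
        ((hgderiv x hx).continuousAt.tendsto.sub (tendsto_const_nhds (x := g x))).abs
      rw [sub_self, abs_zero] at h0
      exact h0.mono_left nhdsWithin_le_nhds
    exact squeeze_zero' (Filter.Eventually.of_forall fun z => dist_nonneg) hev hgc
  have hφd : ∀ x ∈ Set.Ioo a b, deriv φ x = g x := fun x hx => (hφderiv x hx).deriv
  constructor
  · -- smoothness
    have hgC : ContDiffOn ℝ (k + 1 : ℕ) g (Set.Ioo a b) := by
      rw [show ((k + 1 : ℕ) : WithTop ℕ∞) = (k : WithTop ℕ∞) + 1 by push_cast; ring,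
        contDiffOn_succ_iff_deriv_of_isOpen hIopen]
      refine ⟨fun x hx => (hgderiv x hx).differentiableAt.differentiableWithinAt,
        by simp, ?_⟩
      exact hf.congr fun x hx => (hgderiv x hx).deriv
    have : ContDiffOn ℝ ((k + 1 : ℕ) + 1) φ (Set.Ioo a b) := by
      rw [show (((k + 1 : ℕ) : WithTop ℕ∞) + 1) = ((k + 1 : ℕ) : WithTop ℕ∞) + 1 from rfl,
        contDiffOn_succ_iff_deriv_of_isOpen hIopen]
      refine ⟨fun x hx => (hφderiv x hx).differentiableAt.differentiableWithinAt,
        by simp, ?_⟩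
      exact hgC.congr hφd
    have hcast : ((k : WithTop ℕ∞) + 2) = ((k + 1 : ℕ) : WithTop ℕ∞) + 1 := by
      push_cast; ring
    rw [hcast]
    exact this
  · intro x hx
    have h1 : deriv φ =ᶠ[nhds x] g :=
      Filter.eventuallyEq_of_mem (hIopen.mem_nhds hx) fun z hz => hφd z hz
    rw [h1.deriv_eq]
    exact (hgderiv x hx).deriv
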